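/- The F_q-linear map D on F_q[X,Y] defined by D(f) = X^q · ∂f/∂X + Y^q · ∂f/∂Y is equivariant for the action of GL_2(F_q), i.e., D(g·f) = g·D(f) for all g ∈ GL_2(F_q) and all f ∈ F_q[X,Y]. -/

import Mathlib

open MvPolynomial

/-- The Serre operator `D f = X^q ∂f/∂X + Y^q ∂f/∂Y` on `F_q[X, Y]`. -/
noncomputable def serreD (F : Type*) [Field F] [Fintype F] :
    MvPolynomial (Fin 2) F → MvPolynomial (Fin 2) F :=
  fun f => X 0 ^ Fintype.card F * pderiv 0 f + X 1 ^ Fintype.card F * pderiv 1 f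

/-- The action of a matrix `g` on `F[X, Y]`, determined by
`g · X = aX + cY`, `g · Y = bX + dY` for `g = [[a, b], [c, d]]`. -/
noncomputable def matAct {F : Type*} [Field F] (g : Matrix (Fin 2) (Fin 2) F) :
    MvPolynomial (Fin 2) F →ₐ[F] MvPolynomial (Fin 2) F :=
  aeval (fun i => ∑ j, C (g j i) * X j)

lemma serreD_mul (F : Type*) [Field F] [Fintype F] (p q : MvPolynomial (Fin 2) F) :
    serreD F (p * q) = p * serreD F q + serreD F p * q := by
  simp only [serreD, pderiv_mul]
  ring

lemma serreD_add (F : Type*) [Field F] [Fintype F] (p q : MvPolynomial (Fin 2) F) :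
    serreD F (p + q) = serreD F p + serreD F q := by
  simp only [serreD, map_add]
  ring

lemma serreD_C (F : Type*) [Field F] [Fintype F] (a : F) :
    serreD F (C a) = 0 := by
  simp [serreD]

lemma serreD_X (F : Type*) [Field F] [Fintype F] (i : Fin 2) :
    serreD F (X i) = X i ^ Fintype.card F := by
  fin_cases i <;> simp [serreD]

lemma matAct_X {F : Type*} [Field F] (g : Matrix (Fin 2) (Fin 2) F) (i : Fin 2) :
    matAct g (X i) = C (g 0 i) * X 0 + C (g 1 i) * X 1 := by
  simp [matAct, Fin.sum_univ_two]

lemma serreD_matAct_X (F : Type*) [Field F] [Fintype F]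
    (g : Matrix (Fin 2) (Fin 2) F) (i : Fin 2) :
    serreD F (matAct g (X i)) = matAct g (X i) ^ Fintype.card F := by
  obtain ⟨n, hp, hcard⟩ := FiniteField.card F (ringChar F)
  haveI : Fact (Nat.Prime (ringChar F)) := ⟨hp⟩
  rw [matAct_X, hcard, add_pow_char_pow, mul_pow, mul_pow, ← C_pow, ← C_pow,
    ← hcard, FiniteField.pow_card, FiniteField.pow_card]
  simp [serreD]
  ring

/-- The Serre operator `D` is `GL₂(F_q)`-equivariant:
`D (g · f) = g · (D f)` for all `g ∈ GL₂(F_q)` and all `f ∈ F_q[X, Y]`. -/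
theorem serreD_equivariant (F : Type*) [Field F] [Fintype F]
    (g : GL (Fin 2) F) (f : MvPolynomial (Fin 2) F) :
    serreD F (matAct (g : Matrix (Fin 2) (Fin 2) F) f) =
      matAct (g : Matrix (Fin 2) (Fin 2) F) (serreD F f) := by
  set M : Matrix (Fin 2) (Fin 2) F := (g : Matrix (Fin 2) (Fin 2) F)
  induction f using MvPolynomial.induction_on with
  | C a => simp [serreD_C, matAct]
  | add p q hp hq => rw [map_add, serreD_add, serreD_add, map_add, hp, hq]
  | mul_X p i hp =>
      rw [map_mul, serreD_mul, serreD_mul, map_add, map_mul, map_mul, hp,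
        serreD_matAct_X, serreD_X, map_pow]
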